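/- Let ρ₁ : [γ₁,γ_L] → ℝ be proper and bounded below, p ∈ ℝ, and ρ₂(t) := ρ₁(t) - p·t. Define the lifted integrands ρ̂ⱼ(v) := inf_{i,α} (ρⱼ(γᵢ^α) + δ_{𝟙ᵢ^α}(v)) for j = 1,2. Then the Fenchel conjugates satisfy ρ̂₂*(w) = ρ̂₁*(w + p·γ̃ ) + p·γ₁ for all w ∈ ℝˡ, where γ̃ := (γ₂-γ₁,...,γ_L-γ_{L-1}). -/

import Mathlib

open scoped BigOperators

/-- The lifted representative `𝟙ᵢ^α = α𝟙ᵢ + (1-α)𝟙_{i-1} ∈ ℝˡ` (with zero-based index `i`):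
entries `1` below `i`, value `α` at `i`, `0` above. -/
def oneVec {l : ℕ} (i : Fin l) (α : ℝ) : Fin l → ℝ :=
  fun k => if (k : ℕ) < (i : ℕ) then 1 else if k = i then α else 0

/-- The sublabel value `γᵢ^α = γᵢ + α(γ_{i+1} - γᵢ)` (zero-based index `i`). -/
def gam {l : ℕ} (γ : Fin (l + 1) → ℝ) (i : Fin l) (α : ℝ) : ℝ :=
  γ i.castSucc + α * (γ i.succ - γ i.castSucc)

/-- The lifted integrand `ρ̂(v) = inf_{i,α} ( ρ(γᵢ^α) + δ_{𝟙ᵢ^α}(v) )`. -/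
noncomputable def liftInf {l : ℕ} (γ : Fin (l + 1) → ℝ) (ρ : ℝ → ℝ) (v : Fin l → ℝ) : EReal :=
  ⨅ (i : Fin l) (α : ℝ) (_ : α ∈ Set.Icc (0 : ℝ) 1 ∧ v = oneVec i α),
    ((ρ (gam γ i α) : ℝ) : EReal)

/-- Fenchel conjugate of an extended-real-valued function on ℝˡ. -/
noncomputable def fenchelConj {l : ℕ} (f : (Fin l → ℝ) → EReal) (w : Fin l → ℝ) : EReal :=
  ⨆ v : Fin l → ℝ, (((∑ k, w k * v k : ℝ) : EReal) - f v)

-- auxiliary: gam is well-defined on fibers of oneVec, case i < i'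
lemma gam_congr_lt {l : ℕ} (γ : Fin (l + 1) → ℝ) (i i' : Fin l) (α α' : ℝ)
    (hlt : (i : ℕ) < (i' : ℕ)) (h : oneVec i α = oneVec i' α') :
    gam γ i α = gam γ i' α' := by
  have hα : α = 1 := by
    have := congrFun h i
    simpa [oneVec, hlt] using this
  have hα' : α' = 0 := by
    have := congrFun h i'
    have hne : ¬ ((i' : ℕ) < (i : ℕ)) := by omega
    have hne2 : i' ≠ i := by intro e; rw [e] at hlt; omega
    simpa [oneVec, hne, hne2] using this.symm
  have hsucc : (i' : ℕ) = (i : ℕ) + 1 := by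
    by_contra hc
    have hlt2 : (i : ℕ) + 1 < (i' : ℕ) := by omega
    have hk : (i : ℕ) + 1 < l := lt_trans hlt2 i'.isLt
    have := congrFun h ⟨(i : ℕ) + 1, hk⟩
    have h1 : ¬ ((i : ℕ) + 1 < (i : ℕ)) := by omega
    have h2 : (⟨(i : ℕ) + 1, hk⟩ : Fin l) ≠ i := by
      intro e; have := congrArg Fin.val e; simp at this
    simp [oneVec, h1, h2, hlt2] at this
  have : i'.castSucc = i.succ := by
    apply Fin.ext; simp [hsucc]
  subst hα hα'
  simp [gam, this]

lemma gam_congr {l : ℕ} (γ : Fin (l + 1) → ℝ) (i i' : Fin l) (α α' : ℝ)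
    (h : oneVec i α = oneVec i' α') : gam γ i α = gam γ i' α' := by
  rcases lt_trichotomy (i : ℕ) (i' : ℕ) with hlt | heq | hgt
  · exact gam_congr_lt γ i i' α α' hlt h
  · have : i = i' := Fin.ext heq
    subst this
    have := congrFun h i
    have hα : α = α' := by simpa [oneVec] using this
    rw [hα]
  · exact (gam_congr_lt γ i' i α' α hgt h.symm).symm

lemma liftInf_oneVec {l : ℕ} (γ : Fin (l + 1) → ℝ) (ρ : ℝ → ℝ) (i : Fin l) (α : ℝ)
    (hα : α ∈ Set.Icc (0 : ℝ) 1) :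
    liftInf γ ρ (oneVec i α) = ((ρ (gam γ i α) : ℝ) : EReal) := by
  apply le_antisymm
  · exact iInf_le_of_le i (iInf_le_of_le α (iInf_le_of_le ⟨hα, rfl⟩ le_rfl))
  · apply le_iInf; intro i'; apply le_iInf; intro α'; apply le_iInf; rintro ⟨hα', hv⟩
    rw [gam_congr γ i i' α α' hv]

lemma liftInf_top {l : ℕ} (γ : Fin (l + 1) → ℝ) (ρ : ℝ → ℝ) (v : Fin l → ℝ)
    (h : ¬ ∃ i : Fin l, ∃ α : ℝ, α ∈ Set.Icc (0 : ℝ) 1 ∧ v = oneVec i α) :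
    liftInf γ ρ v = ⊤ := by
  push_neg at h
  simp only [liftInf, iInf_eq_top]
  intro i α hc
  exact absurd hc.2 (h i α hc.1)

-- telescoping sum
set_option maxHeartbeats 1000000 in
lemma sum_oneVec (p α : ℝ) (l : ℕ) : ∀ (γ : Fin (l + 1) → ℝ) (i : Fin l),
    ∑ k : Fin l, (p * (γ k.succ - γ k.castSucc)) * oneVec i α k
      = p * (gam γ i α - γ 0) := by
  induction l with
  | zero => intro γ i; exact absurd i.isLt (by omega)
  | succ n ih =>
    intro γ i
    rcases Fin.eq_castSucc_or_eq_last i with ⟨j, rfl⟩ | rfl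
    · rw [Fin.sum_univ_castSucc]
      have hlast : oneVec j.castSucc α (Fin.last n) = 0 := by
        have h1 : ¬ ((Fin.last n : ℕ) < (j.castSucc : ℕ)) := by
          have hj := j.isLt
          simp only [Fin.val_last, Fin.coe_castSucc]
          omega
        have h2 : (Fin.last n) ≠ j.castSucc := by
          intro e; have := congrArg Fin.val e; simp [Fin.last] at this; omega
        simp [oneVec, h1, h2]
      rw [hlast, mul_zero, add_zero]
      have hrec : ∀ k : Fin n,
          (p * (γ (k.castSucc.succ) - γ (k.castSucc.castSucc))) * oneVec j.castSucc α k.castSucc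
          = (p * ((fun m : Fin (n+1) => γ m.castSucc) k.succ
              - (fun m : Fin (n+1) => γ m.castSucc) k.castSucc)) * oneVec j α k := by
        intro k
        have e1 : k.castSucc.succ = (k.succ.castSucc : Fin (n+2)) := by
          apply Fin.ext; simp
        have e2 : oneVec j.castSucc α k.castSucc = oneVec j α k := by
          simp [oneVec, Fin.castSucc_inj]
        rw [e1, e2]
      calc ∑ k : Fin n, (p * (γ k.castSucc.succ - γ k.castSucc.castSucc)) * oneVec j.castSucc α k.castSucc
          = ∑ k : Fin n, (p * ((fun m : Fin (n+1) => γ m.castSucc) k.succ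
              - (fun m : Fin (n+1) => γ m.castSucc) k.castSucc)) * oneVec j α k :=
            Finset.sum_congr rfl (fun k _ => hrec k)
        _ = p * (gam (fun m : Fin (n+1) => γ m.castSucc) j α - (fun m : Fin (n+1) => γ m.castSucc) 0) := ih (fun m : Fin (n+1) => γ m.castSucc) j
        _ = p * (gam γ j.castSucc α - γ 0) := by
            have e3 : (j.succ.castSucc : Fin (n+2)) = j.castSucc.succ := by apply Fin.ext; simp
            simp [gam, e3]
    · -- i = Fin.last n
      rw [Fin.sum_univ_castSucc]
      have hlast : oneVec (Fin.last n) α (Fin.last n) = α := by simp [oneVec]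
      rw [hlast]
      have hrec : ∀ k : Fin n,
          (p * (γ (k.castSucc.succ) - γ (k.castSucc.castSucc))) * oneVec (Fin.last n) α k.castSucc
          = (p * ((fun m : Fin (n+1) => γ m.castSucc) k.succ
              - (fun m : Fin (n+1) => γ m.castSucc) k.castSucc)) := by
        intro k
        have h1 : (k.castSucc : ℕ) < (Fin.last n : ℕ) := by simpa using k.isLt
        have e1 : k.castSucc.succ = (k.succ.castSucc : Fin (n+2)) := by apply Fin.ext; simp
        rw [e1]; simp only [oneVec, if_pos h1, mul_one]
      -- use telescoping
      have htel : ∀ (m : ℕ) (f : Fin (m+1) → ℝ),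
            ∑ k : Fin m, (f k.succ - f k.castSucc) = f (Fin.last m) - f 0 := by
          intro m f
          induction m with
          | zero => simp [Fin.last]
          | succ m ihm =>
            rw [Fin.sum_univ_castSucc]
            have : ∀ k : Fin m, f k.castSucc.succ - f k.castSucc.castSucc
                = (fun x : Fin (m+1) => f x.castSucc) k.succ - (fun x : Fin (m+1) => f x.castSucc) k.castSucc := by
              intro k
              have e1 : k.castSucc.succ = (k.succ.castSucc : Fin (m+2)) := by apply Fin.ext; simp
              rw [e1]
            rw [Finset.sum_congr rfl (fun k _ => this k), ihm (fun x : Fin (m+1) => f x.castSucc)]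
            have e2 : ((Fin.last m).succ : Fin (m+2)) = Fin.last (m+1) := by
              apply Fin.ext; simp [Fin.last]
            have e0 : (((0 : Fin (m+1)).castSucc : Fin (m+2))) = 0 := by
              apply Fin.ext; simp
            simp only [e2, e0]
            ring
      calc ∑ k : Fin n, (p * (γ k.castSucc.succ - γ k.castSucc.castSucc)) * oneVec (Fin.last n) α k.castSucc
              + p * (γ (Fin.last n).succ - γ (Fin.last n).castSucc) * α
            = ∑ k : Fin n, p * ((fun m : Fin (n+1) => γ m.castSucc) k.succ
                - (fun m : Fin (n+1) => γ m.castSucc) k.castSucc)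
              + p * (γ (Fin.last n).succ - γ (Fin.last n).castSucc) * α := by
              rw [Finset.sum_congr rfl (fun k _ => hrec k)]
          _ = p * ((fun m : Fin (n+1) => γ m.castSucc) (Fin.last n)
                - (fun m : Fin (n+1) => γ m.castSucc) 0)
              + p * (γ (Fin.last n).succ - γ (Fin.last n).castSucc) * α := by
              rw [← Finset.mul_sum, htel n (fun m : Fin (n+1) => γ m.castSucc)]
          _ = p * (gam γ (Fin.last n) α - γ 0) := by
              have : ((Fin.last n).castSucc : Fin (n+2)) = (Fin.last n).castSucc := rfl
              simp only [gam]
              have e0 : ((0 : Fin (n+1)).castSucc : Fin (n+2)) = 0 := by apply Fin.ext; simp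
              have el : ((Fin.last n).castSucc : Fin (n+2)) = ((Fin.last n : Fin (n+1)) : Fin (n+1)).castSucc := rfl
              rw [e0]
              ring

lemma ereal_iSup_add_coe {ι : Sort*} (G : ι → EReal) (c : ℝ) [Nonempty ι] :
    (⨆ v, G v) + (c : EReal) = ⨆ v, (G v + (c : EReal)) := by
  apply le_antisymm
  · rw [← EReal.le_sub_iff_add_le (Or.inl (EReal.coe_ne_bot c)) (Or.inl (EReal.coe_ne_top c))]
    apply iSup_le; intro v
    rw [EReal.le_sub_iff_add_le (Or.inl (EReal.coe_ne_bot c)) (Or.inl (EReal.coe_ne_top c))]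
    exact le_iSup (fun v => G v + (c : EReal)) v
  · apply iSup_le; intro v
    exact add_le_add_left (le_iSup G v) _

theorem lifted_conjugate_shift {l : ℕ}
    (γ : Fin (l + 1) → ℝ) (hγ : StrictMono γ)
    (ρ₁ : ℝ → ℝ) (hbdd : ∃ c : ℝ, ∀ t ∈ Set.Icc (γ 0) (γ (Fin.last l)), c ≤ ρ₁ t)
    (p : ℝ) (ρ₂ : ℝ → ℝ) (hρ₂ : ∀ t, ρ₂ t = ρ₁ t - p * t) :
    ∀ w : Fin l → ℝ,
      fenchelConj (liftInf γ ρ₂) w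
        = fenchelConj (liftInf γ ρ₁) (w + fun k : Fin l => p * (γ k.succ - γ k.castSucc))
            + ((p * γ 0 : ℝ) : EReal) := by
  intro w
  rw [fenchelConj, fenchelConj, ereal_iSup_add_coe]
  apply iSup_congr
  intro v
  by_cases hv : ∃ i : Fin l, ∃ α : ℝ, α ∈ Set.Icc (0 : ℝ) 1 ∧ v = oneVec i α
  · obtain ⟨i, α, hα, rfl⟩ := hv
    rw [liftInf_oneVec γ ρ₂ i α hα, liftInf_oneVec γ ρ₁ i α hα]
    rw [← EReal.coe_sub, ← EReal.coe_sub, ← EReal.coe_add]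
    congr 1
    have hsum : ∑ k, (w + fun k : Fin l => p * (γ k.succ - γ k.castSucc)) k * oneVec i α k
        = ∑ k, w k * oneVec i α k + p * (gam γ i α - γ 0) := by
      rw [← sum_oneVec p α l γ i, ← Finset.sum_add_distrib]
      apply Finset.sum_congr rfl
      intro k _
      simp [add_mul]
    rw [hsum, hρ₂]
    ring
  · rw [liftInf_top γ ρ₂ v hv, liftInf_top γ ρ₁ v hv]
    rw [EReal.sub_top, EReal.sub_top, EReal.bot_add]
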